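/- Let F be a non-principal filter on ℕ and suppose the set of enumeration functions of members of F is unbounded with respect to eventual domination. Then for every partition of ℕ into disjoint finite sets there is a member of F disjoint from infinitely many blocks of the partition. -/

import Mathlib

open Filter Set

/-- A strategy: maps finite sequences of the opponent's moves to a natural number. -/
abbrev Strat := List ℕ → ℕ

/-- TWO's move in inning `k` (0-indexed) when following strategy `σ` against ONE's
moves `m`: TWO has seen `m 0, …, m k`. -/
def twoFollow (σ : Strat) (m : ℕ → ℕ) (k : ℕ) : ℕ :=
  σ (List.ofFn fun i : Fin (k + 1) => m i)

/-- ONE's move in inning `k` when following strategy `σ` against TWO's moves `n`: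
ONE's move depends on `n 0, …, n (k-1)` (the first move is `σ []`). -/
def oneFollow (σ : Strat) (n : ℕ → ℕ) (k : ℕ) : ℕ :=
  σ (List.ofFn fun i : Fin k => n i)

/-- TWO wins the play `(m 0, n 0, m 1, n 1, …)` of the game `G1(F)`. -/
def TwoWins1 (F : Set (Set ℕ)) (m n : ℕ → ℕ) : Prop :=
  StrictMono n ∧ (∀ N : ℕ, ∃ k, N ≤ k ∧ m k < n k) ∧ Set.range n ∈ F

/-- TWO wins the play `(m 0, n 0, m 1, n 1, …)` of the game `G2(F)`. -/
def TwoWins2 (F : Set (Set ℕ)) (m n : ℕ → ℕ) : Prop :=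
  (∀ᶠ k in Filter.atTop, m k < n k) ∧ Set.range n ∈ F

/-- `σ` is a winning strategy for TWO in `G1(F)`. -/
def TwoWinning1 (F : Set (Set ℕ)) (σ : Strat) : Prop :=
  ∀ m : ℕ → ℕ, TwoWins1 F m (twoFollow σ m)

/-- `σ` is a winning strategy for ONE in `G1(F)`. -/
def OneWinning1 (F : Set (Set ℕ)) (σ : Strat) : Prop :=
  ∀ n : ℕ → ℕ, ¬ TwoWins1 F (oneFollow σ n) n

/-- `σ` is a winning strategy for TWO in `G2(F)`. -/
def TwoWinning2 (F : Set (Set ℕ)) (σ : Strat) : Prop :=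
  ∀ m : ℕ → ℕ, TwoWins2 F m (twoFollow σ m)

/-- `σ` is a winning strategy for ONE in `G2(F)`. -/
def OneWinning2 (F : Set (Set ℕ)) (σ : Strat) : Prop :=
  ∀ n : ℕ → ℕ, ¬ TwoWins2 F (oneFollow σ n) n

/-- `F` is a non-principal filter on `ℕ`: upward closed, closed under finite
intersections, and every member is infinite. -/
def IsNPFilter (F : Set (Set ℕ)) : Prop :=
  (∀ X ∈ F, ∀ Y : Set ℕ, X ⊆ Y → Y ∈ F) ∧
  (∀ X ∈ F, ∀ Y ∈ F, X ∩ Y ∈ F) ∧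
  (∀ X ∈ F, X.Infinite)

/-- `F` is a rare filter: every partition of `ℕ` into disjoint (nonempty) finite sets
admits a selector in `F`. -/
def IsRare (F : Set (Set ℕ)) : Prop :=
  ∀ I : ℕ → Set ℕ, (∀ n, (I n).Finite) → (∀ n, (I n).Nonempty) →
    (Pairwise fun i j => Disjoint (I i) (I j)) → (⋃ n, I n) = Set.univ →
    ∃ X ∈ F, ∀ n, (X ∩ I n).Subsingleton

/-- The subset of Cantor space `2^ℕ` corresponding to the filter `F`. -/
def cantorCoded (F : Set (Set ℕ)) : Set (ℕ → Bool) :=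
  {χ | {n | χ n = true} ∈ F}

/-- The increasing enumeration of `X ⊆ ℕ`. -/
noncomputable def enum (X : Set ℕ) : ℕ → ℕ := Nat.nth (· ∈ X)

/-- `g` eventually dominates `f`. -/
def EvDom (g f : ℕ → ℕ) : Prop := ∀ᶠ k in Filter.atTop, f k < g k

/-- If the enumeration functions of members of `F` are unbounded under eventual
domination, then every partition of `ℕ` into disjoint finite sets has a member of `F`
disjoint from infinitely many blocks. -/
theorem stmt14 (F : Set (Set ℕ)) (hF : IsNPFilter F)
    (h : ∀ g : ℕ → ℕ, ∃ X ∈ F, ¬ EvDom g (enum X)) :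
    ∀ I : ℕ → Set ℕ, (∀ n, (I n).Finite) → (∀ n, (I n).Nonempty) →
      (Pairwise fun i j => Disjoint (I i) (I j)) → (⋃ n, I n) = Set.univ →
      ∃ X ∈ F, {n : ℕ | X ∩ I n = ∅}.Infinite := by
  classical
  intro I hfin hne hdisj hcov
  set g : ℕ → ℕ := fun k => sSup (⋃ n ∈ Set.Iic (2*k), I n) + 1 with hg
  obtain ⟨X, hXF, hX⟩ := h g
  refine ⟨X, hXF, ?_⟩
  have hXinf : X.Infinite := hF.2.2 X hXF
  have hXinf' : {n | n ∈ X}.Infinite := by simpa using hXinf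
  have hmono : StrictMono (Nat.nth (· ∈ X)) := Nat.nth_strictMono hXinf'
  rw [EvDom, Filter.not_eventually] at hX
  by_contra hfin'
  rw [Set.not_infinite] at hfin'
  obtain ⟨k, hk, hk2⟩ := Filter.frequently_atTop.mp hX hfin'.toFinset.card
  have hk2' : g k ≤ Nat.nth (· ∈ X) k := not_lt.mp hk2
  have hlt : ∀ n ≤ 2*k, ∀ y ∈ I n, y < g k := by
    intro n hn y hy
    have hb : BddAbove (⋃ n ∈ Set.Iic (2*k), I n) :=
      (Set.Finite.biUnion (Set.finite_Iic _) fun n _ => hfin n).bddAbove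
    have hle : y ≤ sSup (⋃ n ∈ Set.Iic (2*k), I n) :=
      le_csSup hb (Set.mem_biUnion (Set.mem_Iic.mpr hn) hy)
    simp only [hg]
    omega
  have hcount : ∀ y ∈ X, y < g k → Nat.count (· ∈ X) y < k := by
    intro y hy hylt
    by_contra hle
    push_neg at hle
    have h1 : Nat.nth (· ∈ X) k ≤ Nat.nth (· ∈ X) (Nat.count (· ∈ X) y) :=
      hmono.monotone hle
    rw [Nat.nth_count hy] at h1
    omega
  let x : ℕ → ℕ := fun n => if hn : (X ∩ I n).Nonempty then hn.choose else 0
  have hxmem : ∀ n, (X ∩ I n).Nonempty → x n ∈ X ∩ I n := by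
    intro n hn
    simp only [x, dif_pos hn]
    exact hn.choose_spec
  set T : Finset ℕ := (Finset.range (2*k+1)).filter (fun n => (X ∩ I n).Nonempty) with hT
  have hTcard : T.card ≤ k := by
    have := Finset.card_le_card_of_injOn (s := T) (t := Finset.range k)
      (fun n => Nat.count (· ∈ X) (x n)) ?_ ?_
    · simpa using this
    · intro n hn
      simp only [hT, Finset.mem_filter, Finset.mem_range] at hn
      obtain ⟨hn1, hn2⟩ : n < 2*k+1 ∧ (X ∩ I n).Nonempty := by
        have h' := Finset.mem_filter.mp (show n ∈ (Finset.range (2*k+1)).filter (fun n => (X ∩ I n).Nonempty) from hn)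
        exact ⟨Finset.mem_range.mp h'.1, h'.2⟩
      obtain ⟨hx1, hx2⟩ := hxmem n hn2
      exact Finset.mem_range.mpr (hcount _ hx1 (hlt n (by omega) _ hx2))
    · intro n hn m hm hnm
      simp only [Finset.mem_coe, hT, Finset.mem_filter, Finset.mem_range] at hn hm
      simp only at hnm
      obtain ⟨hxn1, hxn2⟩ := hxmem n hn.2
      obtain ⟨hxm1, hxm2⟩ := hxmem m hm.2
      have hxeq : x n = x m := by
        rw [← Nat.nth_count (p := (· ∈ X)) hxn1, ← Nat.nth_count (p := (· ∈ X)) hxm1, hnm]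
      by_contra hne'
      exact Set.disjoint_left.mp (hdisj hne') hxn2 (hxeq ▸ hxm2)
  set T' : Finset ℕ := (Finset.range (2*k+1)).filter (fun n => X ∩ I n = ∅) with hT'
  have hsum : T.card + T'.card = 2*k+1 := by
    have : T' = (Finset.range (2*k+1)).filter (fun n => ¬ (X ∩ I n).Nonempty) := by
      apply Finset.filter_congr
      intro n _
      simp [Set.not_nonempty_iff_eq_empty]
    rw [this, Finset.card_filter_add_card_filter_not, Finset.card_range]
  have hsub : T' ⊆ hfin'.toFinset := by
    intro n hn
    simp only [hT', Finset.mem_filter] at hn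
    simpa using hn.2
  have := Finset.card_le_card hsub
  omega
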